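/- Let φ: A → B be a continuous unital homomorphism of Fréchet ℂ-algebras. Then φ is an epimorphism in the category of Fréchet algebras (i.e., for every Fréchet algebra C and every pair of continuous unital ℂ-algebra homomorphisms ψ, ψ': B → C, the equality ψ ∘ φ = ψ' ∘ φ implies ψ = ψ') if and only if for every Fréchet B-bimodule X the map sending a continuous derivation D: B → X to the continuous derivation D ∘ φ: A → X along φ is injective. -/

import Mathlib

open MulOpposite

section Aux

variable {B X : Type} [Ring B] [Algebra ℂ B] [AddCommGroup X] [Module ℂ X]
  [Module B X] [Module Bᵐᵒᵖ X] [SMulCommClass B Bᵐᵒᵖ X]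
  [IsScalarTower ℂ B X] [IsScalarTower ℂ Bᵐᵒᵖ X]

theorem deriv_one_aux (D : B →ₗ[ℂ] X)
    (hD : ∀ b c : B, D (b * c) = b • D c + op c • D b) : D 1 = 0 := by
  have h := hD 1 1
  simp only [mul_one, one_smul, op_one] at h
  exact add_eq_left.mp h.symm

/-- The algebra homomorphism `b ↦ (b, D b)` into the triangular extension. -/
def derivAlgHom (D : B →ₗ[ℂ] X)
    (hD : ∀ b c : B, D (b * c) = b • D c + op c • D b) :
    B →ₐ[ℂ] TrivSqZeroExt B X where
  toFun b := ⟨b, D b⟩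
  map_one' := TrivSqZeroExt.ext rfl (deriv_one_aux D hD)
  map_mul' b c := TrivSqZeroExt.ext rfl (by
    show D (b * c) = _
    rw [hD b c]; rfl)
  map_zero' := TrivSqZeroExt.ext rfl (by simp)
  map_add' b c := TrivSqZeroExt.ext rfl (by simp; rfl)
  commutes' z := TrivSqZeroExt.ext rfl (by
    show D (algebraMap ℂ B z) = (0 : X)
    rw [Algebra.algebraMap_eq_smul_one, map_smul, deriv_one_aux D hD, smul_zero])

end Aux



/-- Let `φ : A → B` be a continuous unital homomorphism of Fréchet `ℂ`-algebras (complete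
metrizable locally convex topological `ℂ`-algebras with jointly continuous multiplication).
Then `φ` is an epimorphism in the category of Fréchet algebras (for every Fréchet algebra
`C` and continuous unital `ℂ`-algebra homomorphisms `ψ, ψ' : B → C`, `ψ ∘ φ = ψ' ∘ φ`
implies `ψ = ψ'`) if and only if for every Fréchet `B`-bimodule `X` the map sending a
continuous derivation `D : B → X` to the continuous derivation `D ∘ φ : A → X` along `φ` is
injective. -/
theorem stmt_0
    (A B : Type)
    [Ring A] [Algebra ℂ A] [UniformSpace A] [IsUniformAddGroup A] [IsTopologicalRing A]
    [ContinuousSMul ℂ A] [CompleteSpace A] [TopologicalSpace.MetrizableSpace A]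
    [LocallyConvexSpace ℝ A]
    [Ring B] [Algebra ℂ B] [UniformSpace B] [IsUniformAddGroup B] [IsTopologicalRing B]
    [ContinuousSMul ℂ B] [CompleteSpace B] [TopologicalSpace.MetrizableSpace B]
    [LocallyConvexSpace ℝ B]
    (φ : A →ₐ[ℂ] B) (hφ : Continuous φ) :
    -- `φ` is an epimorphism in the category of Fréchet algebras
    (∀ (C : Type)
        [Ring C] [Algebra ℂ C] [UniformSpace C] [IsUniformAddGroup C] [IsTopologicalRing C]
        [ContinuousSMul ℂ C] [CompleteSpace C] [TopologicalSpace.MetrizableSpace C]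
        [LocallyConvexSpace ℝ C],
      ∀ ψ ψ' : B →ₐ[ℂ] C, Continuous ψ → Continuous ψ' →
        ψ.comp φ = ψ'.comp φ → ψ = ψ') ↔
    -- for every Fréchet `B`-bimodule `X`, restriction of continuous derivations along `φ`
    -- is injective
    (∀ (X : Type)
        [AddCommGroup X] [Module ℂ X] [UniformSpace X] [IsUniformAddGroup X]
        [ContinuousSMul ℂ X] [CompleteSpace X] [TopologicalSpace.MetrizableSpace X]
        [LocallyConvexSpace ℝ X]
        [Module B X] [Module Bᵐᵒᵖ X] [SMulCommClass B Bᵐᵒᵖ X]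
        [IsScalarTower ℂ B X] [IsScalarTower ℂ Bᵐᵒᵖ X]
        [ContinuousSMul B X] [ContinuousSMul Bᵐᵒᵖ X],
      ∀ D D' : B →L[ℂ] X,
        (∀ b c : B, D (b * c) = b • D c + MulOpposite.op c • D b) →
        (∀ b c : B, D' (b * c) = b • D' c + MulOpposite.op c • D' b) →
        (∀ a : A, D (φ a) = D' (φ a)) → D = D') := by
  constructor
  · -- epi → derivation injectivity
    intro h X _ _ _ _ _ _ _ _ _ _ _ _ _ _ _ D D' hD hD' hag
    letI : UniformSpace (TrivSqZeroExt B X) := instUniformSpaceProd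
    letI iUAG : IsUniformAddGroup (TrivSqZeroExt B X) :=
      inferInstanceAs (IsUniformAddGroup (B × X))
    letI iTR : @IsTopologicalRing (TrivSqZeroExt B X) UniformSpace.toTopologicalSpace _ := by
      exact (inferInstance : @IsTopologicalRing (TrivSqZeroExt B X)
        TrivSqZeroExt.instTopologicalSpace _)
    letI iCS : @ContinuousSMul ℂ (TrivSqZeroExt B X) _ _ UniformSpace.toTopologicalSpace :=
      inferInstanceAs (ContinuousSMul ℂ (B × X))
    letI iC : CompleteSpace (TrivSqZeroExt B X) :=
      inferInstanceAs (CompleteSpace (B × X))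
    letI iM : @TopologicalSpace.MetrizableSpace (TrivSqZeroExt B X) UniformSpace.toTopologicalSpace :=
      inferInstanceAs (TopologicalSpace.MetrizableSpace (B × X))
    letI iL : @LocallyConvexSpace ℝ (TrivSqZeroExt B X) _ _ _ _ UniformSpace.toTopologicalSpace :=
      inferInstanceAs (LocallyConvexSpace ℝ (B × X))
    have hc1 : Continuous (⇑(derivAlgHom D.toLinearMap hD)) := by
      show Continuous fun b : B => ((b, D b) : B × X)
      exact Continuous.prodMk continuous_id D.continuous
    have hc2 : Continuous (⇑(derivAlgHom D'.toLinearMap hD')) := by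
      show Continuous fun b : B => ((b, D' b) : B × X)
      exact Continuous.prodMk continuous_id D'.continuous
    have key := @h (TrivSqZeroExt B X) _ _ _ _ _ _ _ _ iL
      (derivAlgHom D.toLinearMap hD) (derivAlgHom D'.toLinearMap hD')
      hc1 hc2
      (by
        ext a
        · rfl
        · exact hag a)
    ext b
    exact congrArg TrivSqZeroExt.snd (DFunLike.congr_fun key b)
  · -- derivation injectivity → epi
    intro h C _ _ _ _ _ _ _ _ _ ψ ψ' hψ hψ' heq
    letI : Module B C := Module.compHom C ψ.toRingHom
    letI : Module Bᵐᵒᵖ C := Module.compHom C (RingHom.op ψ'.toRingHom)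
    have hsmul : ∀ (b : B) (x : C), b • x = ψ b * x := fun _ _ => rfl
    have hsmul' : ∀ (b : B) (x : C), op b • x = x * ψ' b := fun _ _ => rfl
    letI : SMulCommClass B Bᵐᵒᵖ C := ⟨by
      rintro b ⟨c⟩ x
      show ψ b * (x * ψ' c) = (ψ b * x) * ψ' c
      rw [mul_assoc]⟩
    letI : IsScalarTower ℂ B C := ⟨by
      intro z b x
      show ψ (z • b) * x = z • (ψ b * x)
      rw [map_smul, smul_mul_assoc]⟩
    letI : IsScalarTower ℂ Bᵐᵒᵖ C := ⟨by
      rintro z ⟨b⟩ x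
      show x * ψ' (z • b) = z • (x * ψ' b)
      rw [map_smul, mul_smul_comm]⟩
    letI : ContinuousSMul B C := ⟨by
      show Continuous fun p : B × C => ψ p.1 * p.2
      exact ((hψ.comp continuous_fst).mul continuous_snd)⟩
    letI : ContinuousSMul Bᵐᵒᵖ C := ⟨by
      show Continuous fun p : Bᵐᵒᵖ × C => p.2 * ψ' p.1.unop
      exact continuous_snd.mul
        (hψ'.comp (MulOpposite.continuous_unop.comp continuous_fst))⟩
    set D : B →L[ℂ] C :=
      { toLinearMap := ψ.toLinearMap - ψ'.toLinearMap
        cont := hψ.sub hψ' } with hDdef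
    have hDapp : ∀ b : B, D b = ψ b - ψ' b := fun _ => rfl
    have hder : ∀ b c : B, D (b * c) = b • D c + op c • D b := by
      intro b c
      rw [hDapp, hDapp, hDapp, hsmul, hsmul', map_mul, map_mul]
      noncomm_ring
    have hzero : ∀ b c : B, (0 : B →L[ℂ] C) (b * c) =
        b • (0 : B →L[ℂ] C) c + op c • (0 : B →L[ℂ] C) b := by
      intro b c
      simp
    have key := h C D 0 hder hzero (by
      intro a
      have := DFunLike.congr_fun heq a
      simp only [AlgHom.comp_apply] at this
      simp [hDapp, this])
    ext b
    have := DFunLike.congr_fun key b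
    rw [hDapp] at this
    simpa [sub_eq_zero] using this
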